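/- In the k-binomial transform, incrementing the total element count from t to t+1 triggers a merge of components 1 through j where j is the largest index such that the representation satisfies D_1+1 = D_2, D_2+1 = D_3, ..., D_{j−1}+1 = D_j after incrementing D_1; the resulting representation with D_1' = 0, ..., D_{j−1}' = j−2 reassigned to i−1 for i < j and D_j' = D_{j−1}+1 is the unique k-binomial representation of t+1. -/

import Mathlib

open Finset

lemma hockey_stick (d : ℕ) : ∀ n : ℕ,
    (∑ i ∈ range n, (d + i).choose (i + 1)) + 1 = (d + n).choose n
  | 0 => by simp
  | n + 1 => by
    rw [sum_range_succ]
    have h1 := hockey_stick d n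
    have h2 : (d + (n + 1)).choose (n + 1)
        = (d + n).choose n + (d + n).choose (n + 1) := by
      rw [show d + (n + 1) = (d + n) + 1 from rfl, Nat.choose_succ_succ']
    omega

/-- k-binomial transform increment: if the representation of t has a maximal cascade
D_i = D_1 + (i−1) for i ≤ j (1-indexed; here 0-indexed D i = d + i for i ≤ j), and the
cascade stops at j (D j + 1 < D i for i > j), then reassigning D'_i = i−1 for i < j,
D'_j = D_j + 1, D'_i = D_i for i > j yields a strictly increasing sequence whose
k-binomial sum is t + 1, i.e. the unique k-binomial representation of t+1. -/
theorem k_binomial_increment (k : ℕ) (D : Fin k → ℕ) (j : Fin k) (d : ℕ)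
    (hmono : StrictMono D)
    (hcasc : ∀ i : Fin k, i ≤ j → D i = d + (i : ℕ))
    (hmax : ∀ i : Fin k, j < i → D j + 1 < D i) :
    StrictMono (fun i : Fin k =>
        if i < j then (i : ℕ) else if i = j then D j + 1 else D i) ∧
    (∑ i : Fin k,
        (if i < j then (i : ℕ) else if i = j then D j + 1 else D i).choose ((i : ℕ) + 1)) =
      (∑ i : Fin k, (D i).choose ((i : ℕ) + 1)) + 1 := by
  have hjk : (j : ℕ) < k := j.isLt
  have hDj : D j = d + (j : ℕ) := hcasc j le_rfl
  constructor
  · intro a b hab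
    simp only
    rcases lt_trichotomy a j with ha | ha | ha
    · rw [if_pos ha]
      rcases lt_trichotomy b j with hb | hb | hb
      · rw [if_pos hb]; exact hab
      · subst hb
        rw [if_neg (lt_irrefl b), if_pos rfl]
        have h1 : (a : ℕ) < (b : ℕ) := ha
        omega
      · rw [if_neg (not_lt.mpr hb.le), if_neg hb.ne']
        have h1 : (a : ℕ) < (j : ℕ) := ha
        have h2 := hmax b hb
        omega
    · subst ha
      rw [if_neg (lt_irrefl a), if_pos rfl, if_neg (not_lt.mpr hab.le),
        if_neg hab.ne']
      exact hmax b hab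
    · have hb : j < b := ha.trans hab
      rw [if_neg (not_lt.mpr ha.le), if_neg ha.ne', if_neg (not_lt.mpr hb.le),
        if_neg hb.ne']
      exact hmono hab
  · set E : ℕ → ℕ := fun n => if h : n < k then D ⟨n, h⟩ else 0 with hE
    have hEval : ∀ m : Fin k, E (m : ℕ) = D m := by
      intro m
      simp [hE, m.isLt]
    have h1 : (∑ i : Fin k,
        (if i < j then (i : ℕ) else if i = j then D j + 1 else D i).choose ((i : ℕ) + 1)) =
        ∑ i ∈ range k,
          (if i < (j : ℕ) then i else if i = (j : ℕ) then E (j : ℕ) + 1 else E i).choose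
            (i + 1) := by
      rw [← Fin.sum_univ_eq_sum_range (fun n =>
        (if n < (j : ℕ) then n else if n = (j : ℕ) then E (j : ℕ) + 1 else E n).choose
          (n + 1)) k]
      apply Finset.sum_congr rfl
      intro i _
      simp only [Fin.lt_def, Fin.ext_iff, hEval i, hEval j]
    have h2 : (∑ i : Fin k, (D i).choose ((i : ℕ) + 1)) =
        ∑ i ∈ range k, (E i).choose (i + 1) := by
      rw [← Fin.sum_univ_eq_sum_range (fun n => (E n).choose (n + 1)) k]
      apply Finset.sum_congr rfl
      intro i _
      rw [hEval i]
    rw [h1, h2]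
    have hsplit : ∀ f : ℕ → ℕ, (∑ i ∈ range k, f i) =
        (∑ i ∈ range ((j : ℕ) + 1), f i) + ∑ i ∈ Ico ((j : ℕ) + 1) k, f i := by
      intro f
      rw [range_eq_Ico, ← Finset.sum_Ico_consecutive f (Nat.zero_le ((j : ℕ) + 1)) hjk, range_eq_Ico]
    rw [hsplit, hsplit]
    have htail : (∑ i ∈ Ico ((j : ℕ) + 1) k,
        (if i < (j : ℕ) then i else if i = (j : ℕ) then E (j : ℕ) + 1 else E i).choose
          (i + 1)) = ∑ i ∈ Ico ((j : ℕ) + 1) k, (E i).choose (i + 1) := by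
      apply Finset.sum_congr rfl
      intro i hi
      rw [Finset.mem_Ico] at hi
      rw [if_neg (by omega), if_neg (by omega)]
    have hheadnew : (∑ i ∈ range ((j : ℕ) + 1),
        (if i < (j : ℕ) then i else if i = (j : ℕ) then E (j : ℕ) + 1 else E i).choose
          (i + 1)) = (d + ((j : ℕ) + 1)).choose ((j : ℕ) + 1) := by
      rw [sum_range_succ]
      have hz : (∑ i ∈ range (j : ℕ),
          (if i < (j : ℕ) then i else if i = (j : ℕ) then E (j : ℕ) + 1 else E i).choose
            (i + 1)) = 0 := by
        apply Finset.sum_eq_zero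
        intro i hi
        rw [Finset.mem_range] at hi
        rw [if_pos hi]
        exact Nat.choose_eq_zero_of_lt (Nat.lt_succ_self i)
      rw [hz, if_neg (lt_irrefl _), if_pos rfl, hEval j, hDj]
      ring_nf
    have hheadold : (∑ i ∈ range ((j : ℕ) + 1), (E i).choose (i + 1)) + 1 =
        (d + ((j : ℕ) + 1)).choose ((j : ℕ) + 1) := by
      have he : ∀ i ∈ range ((j : ℕ) + 1), (E i).choose (i + 1) = (d + i).choose (i + 1) := by
        intro i hi
        rw [Finset.mem_range] at hi
        have hik : i < k := lt_of_lt_of_le hi hjk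
        have hle : (⟨i, hik⟩ : Fin k) ≤ j := by
          rw [Fin.le_def]; simpa using Nat.lt_succ_iff.mp hi
        have := hcasc ⟨i, hik⟩ hle
        simp [hE, hik, this]
      rw [Finset.sum_congr rfl he]
      exact hockey_stick d ((j : ℕ) + 1)
    rw [htail, hheadnew]
    omega
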